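/- arXiv:2108.05714 — 6 statements merged into one kernel-verified Lean document; each statement's English description precedes it below -/
import Mathlib

section
/- The free group F₂ of rank 2 is F₂-paradoxical with respect to the action of F₂ on itself by left multiplication. That is, there exist pairwise disjoint subsets A₁,...,Aₙ, B₁,...,Bₘ of F₂ and group elements g₁,...,gₙ, h₁,...,hₘ ∈ F₂ such that F₂ = ⋃ᵢ gᵢAᵢ and F₂ = ⋃ⱼ hⱼBⱼ. -/
open Pointwise

/-- `A` and `B` are `G`-equidecomposable: each can be partitioned into the same finite
number of pairwise disjoint pieces that are matched up by elements of `G`. -/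
def Equidecomposable (G : Type*) {X : Type*} [Group G] [MulAction G X] (A B : Set X) : Prop :=
  ∃ (n : ℕ) (As Bs : Fin n → Set X) (g : Fin n → G),
    (⋃ i, As i) = A ∧ (⋃ i, Bs i) = B ∧
    Pairwise (Function.onFun Disjoint As) ∧
    Pairwise (Function.onFun Disjoint Bs) ∧
    ∀ i, g i • As i = Bs i

/-- `E` is `G`-paradoxical. -/
def Paradoxical (G : Type*) {X : Type*} [Group G] [MulAction G X] (E : Set X) : Prop :=
  ∃ (n m : ℕ) (As : Fin n → Set X) (Bs : Fin m → Set X) (g : Fin n → G) (h : Fin m → G),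
    (∀ i, As i ⊆ E) ∧ (∀ j, Bs j ⊆ E) ∧
    Pairwise (Function.onFun Disjoint As) ∧
    Pairwise (Function.onFun Disjoint Bs) ∧
    (∀ i j, Disjoint (As i) (Bs j)) ∧
    (⋃ i, g i • As i) = E ∧ (⋃ j, h j • Bs j) = E

namespace ParadoxAux

/-- Words whose reduced form starts with the letter `p`. -/
def S (p : Bool × Bool) : Set (FreeGroup Bool) := {w | w.toWord.head? = some p}

lemma S_disjoint {p q : Bool × Bool} (h : p ≠ q) : Disjoint (S p) (S q) := by
  rw [Set.disjoint_left]
  intro w hp hq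
  exact h (Option.some_injective _ (hp.symm.trans hq))

lemma toWord_cons_mul (p : Bool × Bool) (w : FreeGroup Bool) :
    (FreeGroup.mk [p] * w).toWord =
      if w.toWord.head? = some (p.1, !p.2) then w.toWord.tail else p :: w.toWord := by
  conv_lhs => rw [← FreeGroup.mk_toWord (x := w)]
  rw [FreeGroup.mul_mk, List.singleton_append, FreeGroup.toWord_mk, FreeGroup.reduce.cons,
    FreeGroup.reduce_toWord]
  cases h : w.toWord with
  | nil => simp
  | cons hd tl =>
    simp only [List.head?_cons, List.tail_cons]
    by_cases hc : p.1 = hd.1 ∧ p.2 = !hd.2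
    · rw [if_pos hc]; refine (if_pos ?_).symm
      obtain ⟨h1, h2⟩ := hc
      cases hd; cases p
      simp_all
    · rw [if_neg hc]; refine (if_neg ?_).symm
      intro he
      injection he with he
      subst he
      exact hc ⟨rfl, (Bool.not_not p.2).symm⟩

lemma head_mul (p : Bool × Bool) (w : FreeGroup Bool) :
    (FreeGroup.mk [p] * w).toWord.head? = some p ↔
      w.toWord.head? ≠ some (p.1, !p.2) := by
  rw [toWord_cons_mul]
  split_ifs with h
  · simp only [h, ne_eq, not_true_eq_false, iff_false]
    cases hw : w.toWord with
    | nil => rw [hw] at h; simp at h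
    | cons hd tl =>
      rw [hw, List.head?_cons] at h
      injection h with h
      subst h
      rw [List.tail_cons]
      intro ht
      cases htl : tl with
      | nil => rw [htl] at ht; simp at ht
      | cons q tl' =>
        rw [htl, List.head?_cons] at ht
        injection ht with ht
        subst ht
        have hred := FreeGroup.reduce_toWord w
        rw [hw, htl] at hred
        exact FreeGroup.reduce.not (L₂ := []) (L₃ := tl') (x := q.1) (b := !q.2)
          (by rw [hred]; simp [Bool.not_not])
  · simpa using h

end ParadoxAux

/-- The free group on two generators is paradoxical with respect to its action on
itself by left multiplication. -/
theorem freeGroup_paradoxical :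
    Paradoxical (FreeGroup Bool) (Set.univ : Set (FreeGroup Bool)) := by
  classical
  open ParadoxAux in
  refine ⟨2, 2, ![S (true, true), S (true, false)], ![S (false, true), S (false, false)],
    ![1, FreeGroup.mk [(true, true)]], ![1, FreeGroup.mk [(false, true)]],
    fun _ => Set.subset_univ _, fun _ => Set.subset_univ _, ?_, ?_, ?_, ?_, ?_⟩
  · intro i j hij
    fin_cases i <;> fin_cases j <;> simp_all [Function.onFun] <;>
      first
      | exact S_disjoint (by decide)
      | exact (S_disjoint (by decide)).symm
  · intro i j hij
    fin_cases i <;> fin_cases j <;> simp_all [Function.onFun] <;>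
      first
      | exact S_disjoint (by decide)
      | exact (S_disjoint (by decide)).symm
  · intro i j
    fin_cases i <;> fin_cases j <;> simp <;> exact S_disjoint (by decide)
  · ext w
    simp only [Set.mem_univ, iff_true, Set.mem_iUnion]
    by_cases h : w.toWord.head? = some (true, true)
    · exact ⟨0, by simpa [S] using h⟩
    · refine ⟨1, ?_⟩
      simp only [Matrix.cons_val_one, Matrix.head_cons, Matrix.cons_val_zero]
      rw [Set.mem_smul_set_iff_inv_smul_mem]
      have hinv : (FreeGroup.mk [((true : Bool), (true : Bool))])⁻¹ =
          FreeGroup.mk [(true, false)] := by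
        rw [FreeGroup.inv_mk]; rfl
      rw [hinv, smul_eq_mul]
      show (FreeGroup.mk [((true : Bool), (false : Bool))] * w).toWord.head? = some (true, false)
      rw [head_mul]
      simpa using h
  · ext w
    simp only [Set.mem_univ, iff_true, Set.mem_iUnion]
    by_cases h : w.toWord.head? = some (false, true)
    · exact ⟨0, by simpa [S] using h⟩
    · refine ⟨1, ?_⟩
      simp only [Matrix.cons_val_one, Matrix.head_cons, Matrix.cons_val_zero]
      rw [Set.mem_smul_set_iff_inv_smul_mem]
      have hinv : (FreeGroup.mk [((false : Bool), (true : Bool))])⁻¹ =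
          FreeGroup.mk [(false, false)] := by
        rw [FreeGroup.inv_mk]; rfl
      rw [hinv, smul_eq_mul]
      show (FreeGroup.mk [((false : Bool), (false : Bool))] * w).toWord.head? = some (false, false)
      rw [head_mul]
      simpa using h
end

section
/- F₂, the free group on generators a and b, can be partitioned into two disjoint sets P₁ and P₂ such that P₁ is F₂-equidecomposable with F₂ and P₂ is F₂-equidecomposable with F₂. Explicitly, take A₁ = Ψ(a⁻¹) ∪ {aⁿ : n ≥ 0}, A₂ = Ψ(a) \ {aⁿ : n ≥ 0}, B₁ = Ψ(b⁻¹), B₂ = Ψ(b), P₁ = A₁ ∪ A₂, P₂ = B₁ ∪ B₂; then a·A₁ ∪ A₂ = F₂ and b·B₁ ∪ B₂ = F₂. -/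
open Pointwise

/-- `Psi ρ` is the set of elements of the free group on two generators whose reduced word
begins with the letter `ρ`. -/
def Psi (ρ : Bool × Bool) : Set (FreeGroup Bool) :=
  {w | w.toWord.head? = some ρ}

section Aux

variable {α : Type*} [DecidableEq α]

/-- Prepending a letter that doesn't cancel. -/
lemma aux_toWord_mk_single_mul (x : α) (b : Bool) (w : FreeGroup α)
    (h : w.toWord.head? ≠ some (x, !b)) :
    (FreeGroup.mk [(x, b)] * w).toWord = (x, b) :: w.toWord := by
  conv_lhs => rw [← FreeGroup.mk_toWord (x := w)]
  rw [FreeGroup.mul_mk, List.singleton_append, FreeGroup.toWord_mk, FreeGroup.reduce.cons]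
  rw [FreeGroup.reduce_toWord]
  rcases hw : w.toWord with _ | ⟨⟨y, c⟩, t⟩
  · rfl
  · simp only
    rw [if_neg]
    rintro ⟨rfl, rfl⟩
    exact h (by rw [hw]; simp)

lemma aux_head_structure (x : α) (b : Bool) (w : FreeGroup α)
    (h : w.toWord.head? = some (x, b)) :
    ∃ t : List (α × Bool), w.toWord = (x, b) :: t ∧ FreeGroup.reduce t = t ∧
      t.head? ≠ some (x, !b) := by
  rcases hw : w.toWord with _ | ⟨y, t⟩
  · simp [hw] at h
  · obtain rfl : y = (x, b) := by simpa [hw] using h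
    refine ⟨t, rfl, ?_⟩
    have hred : FreeGroup.reduce ((x, b) :: t) = (x, b) :: t := by
      rw [← hw]; exact FreeGroup.reduce_toWord w
    rw [FreeGroup.reduce.cons] at hred
    rcases ht : FreeGroup.reduce t with _ | ⟨⟨z, c⟩, r⟩
    · rw [ht] at hred
      simp only [List.cons.injEq] at hred
      obtain rfl : t = [] := hred.2.symm
      simp [FreeGroup.reduce_nil]
    · rw [ht] at hred
      simp only at hred
      by_cases hc : x = z ∧ b = !c
      · rw [if_pos hc] at hred
        exfalso
        have hle : (FreeGroup.reduce t).length ≤ t.length :=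
          (FreeGroup.reduce.red (L := t)).length_le
        rw [ht, hred] at hle
        simp only [List.length_cons] at hle; omega
      · rw [if_neg hc] at hred
        simp only [List.cons.injEq, true_and] at hred
        subst hred
        refine ⟨rfl, ?_⟩
        intro h1
        simp only [List.head?_cons, Option.some.injEq, Prod.mk.injEq] at h1
        exact hc ⟨h1.1.symm, by simp [h1.2]⟩

lemma aux_inv_of (x : α) : (FreeGroup.of x)⁻¹ = FreeGroup.mk [(x, false)] := by
  rw [FreeGroup.of, FreeGroup.inv_mk]
  rfl

lemma aux_pow_toWord (x : α) (n : ℕ) :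
    (FreeGroup.of x ^ n).toWord = List.replicate n (x, true) := by
  rw [FreeGroup.of, FreeGroup.pow_mk, FreeGroup.toWord_mk]
  have h : List.flatten (List.replicate n [(x, true)]) = List.replicate n (x, true) := by
    induction n with
    | zero => simp
    | succ m ih => simp [List.replicate_succ, ih]
  rw [h, FreeGroup.reduce_replicate]

end Aux

lemma aux_smul_psi (x : Bool) :
    FreeGroup.of x • Psi (x, false) = {y : FreeGroup Bool | y.toWord.head? ≠ some (x, true)} := by
  ext y
  rw [Set.mem_smul_set_iff_inv_smul_mem, smul_eq_mul]
  constructor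
  · intro hy
    have hy' : ((FreeGroup.of x)⁻¹ * y).toWord.head? = some (x, false) := hy
    obtain ⟨t, hwt, hred, hh⟩ := aux_head_structure x false _ hy'
    have h1 : (FreeGroup.of x)⁻¹ * y = (FreeGroup.of x)⁻¹ * FreeGroup.mk t := by
      conv_lhs => rw [← FreeGroup.mk_toWord (x := (FreeGroup.of x)⁻¹ * y)]
      rw [hwt, aux_inv_of, FreeGroup.mul_mk]
      rfl
    have h2 : y = FreeGroup.mk t := mul_left_cancel h1
    show y.toWord.head? ≠ some (x, true)
    rw [h2, FreeGroup.toWord_mk, hred]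
    simpa using hh
  · intro hy
    show ((FreeGroup.of x)⁻¹ * y).toWord.head? = some (x, false)
    rw [aux_inv_of, aux_toWord_mk_single_mul x false y (by simpa using hy)]
    rfl

lemma aux_pairwise_two {X : Type*} (s t : Set X) (h : Disjoint s t) :
    Pairwise (Function.onFun Disjoint ![s, t]) := by
  intro i j hij
  fin_cases i <;> fin_cases j <;>
    simp only [Function.onFun, Matrix.cons_val_zero, Matrix.cons_val_one, Matrix.head_cons,
      Fin.mk_zero, Fin.mk_one] at *
  · exact absurd rfl hij
  · exact h
  · exact h.symm
  · exact absurd rfl hij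

/-- The free group `F₂` on generators `a = of true`, `b = of false` is partitioned into
`P₁` and `P₂`, each `F₂`-equidecomposable with `F₂`, using the explicit pieces
`A₁ = Ψ(a⁻¹) ∪ {aⁿ : n ≥ 0}`, `A₂ = Ψ(a) \ {aⁿ : n ≥ 0}`, `B₁ = Ψ(b⁻¹)`, `B₂ = Ψ(b)`. -/
theorem freeGroup_partition_equidecomposable :
    ∀ A₁ A₂ B₁ B₂ P₁ P₂ : Set (FreeGroup Bool),
    A₁ = Psi (true, false) ∪ {x | ∃ n : ℕ, x = FreeGroup.of true ^ n} →
    A₂ = Psi (true, true) \ {x | ∃ n : ℕ, x = FreeGroup.of true ^ n} →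
    B₁ = Psi (false, false) →
    B₂ = Psi (false, true) →
    P₁ = A₁ ∪ A₂ → P₂ = B₁ ∪ B₂ →
    (FreeGroup.of true • A₁) ∪ A₂ = Set.univ ∧
    (FreeGroup.of false • B₁) ∪ B₂ = Set.univ ∧
    Disjoint P₁ P₂ ∧ P₁ ∪ P₂ = Set.univ ∧
    Equidecomposable (FreeGroup Bool) P₁ (Set.univ : Set (FreeGroup Bool)) ∧
    Equidecomposable (FreeGroup Bool) P₂ (Set.univ : Set (FreeGroup Bool)) := by
  intro A₁ A₂ B₁ B₂ P₁ P₂ hA₁ hA₂ hB₁ hB₂ hP₁ hP₂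
  set a : FreeGroup Bool := FreeGroup.of true with ha
  set b : FreeGroup Bool := FreeGroup.of false with hb
  -- Goal 1
  have goal1 : (a • A₁) ∪ A₂ = Set.univ := by
    ext y
    simp only [Set.mem_univ, iff_true, Set.mem_union]
    by_cases h : y.toWord.head? = some (true, true)
    · by_cases hS : ∃ n : ℕ, y = FreeGroup.of true ^ n
      · obtain ⟨n, rfl⟩ := hS
        cases n with
        | zero => simp [FreeGroup.toWord_one] at h
        | succ m =>
          left
          rw [hA₁]
          exact ⟨a ^ m, Or.inr ⟨m, rfl⟩, by show a • a ^ m = a ^ (m + 1); rw [smul_eq_mul, ← pow_succ']⟩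
      · right
        rw [hA₂]
        exact ⟨h, hS⟩
    · left
      rw [hA₁, Set.smul_set_union]
      left
      rw [ha, aux_smul_psi true]
      exact h
  -- Goal 2
  have goal2 : (b • B₁) ∪ B₂ = Set.univ := by
    ext y
    simp only [Set.mem_univ, iff_true, Set.mem_union]
    by_cases h : y.toWord.head? = some (false, true)
    · right; rw [hB₂]; exact h
    · left; rw [hB₁, hb, aux_smul_psi false]; exact h
  -- head facts for membership
  have memP₁ : ∀ z ∈ P₁, z.toWord.head? = none ∨ z.toWord.head? = some (true, false) ∨
      z.toWord.head? = some (true, true) := by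
    intro z hz
    rw [hP₁, hA₁, hA₂] at hz
    rcases hz with (hz | ⟨n, rfl⟩) | hz
    · exact Or.inr (Or.inl hz)
    · rw [aux_pow_toWord]
      cases n with
      | zero => simp
      | succ m => right; right; simp [List.replicate_succ]
    · exact Or.inr (Or.inr hz.1)
  have memP₂ : ∀ z ∈ P₂, z.toWord.head? = some (false, false) ∨
      z.toWord.head? = some (false, true) := by
    intro z hz
    rw [hP₂, hB₁, hB₂] at hz
    exact hz
  -- Goal 3
  have goal3 : Disjoint P₁ P₂ := by
    rw [Set.disjoint_left]
    intro z hz₁ hz₂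
    rcases memP₁ z hz₁ with h | h | h <;> rcases memP₂ z hz₂ with h' | h' <;>
      simp [h] at h'
  -- Goal 4
  have goal4 : P₁ ∪ P₂ = Set.univ := by
    ext z
    simp only [Set.mem_univ, iff_true, Set.mem_union]
    rcases hz : z.toWord.head? with _ | ⟨x, c⟩
    · left
      rw [hP₁, hA₁]
      left; right
      exact ⟨0, by rw [pow_zero, ← FreeGroup.toWord_eq_nil_iff, List.head?_eq_none_iff.mp hz]⟩
    · cases x
      · right
        rw [hP₂, hB₁, hB₂]
        cases c
        · exact Or.inl hz
        · exact Or.inr hz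
      · cases c
        · left; rw [hP₁, hA₁]; exact Or.inl (Or.inl hz)
        · by_cases hS : ∃ n : ℕ, z = FreeGroup.of true ^ n
          · left; rw [hP₁, hA₁]; exact Or.inl (Or.inr hS)
          · left; rw [hP₁, hA₂]; exact Or.inr ⟨hz, hS⟩
  -- disjointness of pieces
  have dA : Disjoint A₁ A₂ := by
    rw [Set.disjoint_left, hA₁, hA₂]
    rintro z (hz | hz) ⟨hz', hz''⟩
    · have : some ((true : Bool), false) = some ((true : Bool), true) := hz ▸ hz'
      simp at this
    · exact hz'' hz
  have dA' : Disjoint (a • A₁) A₂ := by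
    rw [Set.disjoint_left]
    intro z hz hz'
    rw [hA₂] at hz'
    rw [hA₁, Set.smul_set_union] at hz
    rcases hz with hz | hz
    · rw [ha, aux_smul_psi true] at hz
      exact hz hz'.1
    · obtain ⟨w, ⟨n, rfl⟩, hw⟩ := hz
      refine hz'.2 ⟨n + 1, ?_⟩
      rw [← hw]
      show a • a ^ n = a ^ (n + 1)
      rw [smul_eq_mul, ← pow_succ']
  have dB : Disjoint B₁ B₂ := by
    rw [Set.disjoint_left, hB₁, hB₂]
    intro z hz hz'
    have : some ((false : Bool), false) = some ((false : Bool), true) := hz ▸ hz'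
    simp at this
  have dB' : Disjoint (b • B₁) B₂ := by
    rw [Set.disjoint_left]
    intro z hz hz'
    rw [hB₂] at hz'
    rw [hB₁, hb, aux_smul_psi false] at hz
    exact hz hz'
  refine ⟨goal1, goal2, goal3, goal4, ?_, ?_⟩
  · refine ⟨2, ![A₁, A₂], ![a • A₁, A₂], ![a, 1], ?_, ?_, aux_pairwise_two _ _ dA,
      aux_pairwise_two _ _ dA', ?_⟩
    · ext z
      simp only [Set.mem_iUnion, Fin.exists_fin_two, Matrix.cons_val_zero, Matrix.cons_val_one,
        Matrix.head_cons, hP₁, Set.mem_union]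
    · ext z
      simp only [Set.mem_iUnion, Fin.exists_fin_two, Matrix.cons_val_zero, Matrix.cons_val_one,
        Matrix.head_cons]
      rw [← Set.mem_union, goal1]
    · intro i
      fin_cases i <;> simp
  · refine ⟨2, ![B₁, B₂], ![b • B₁, B₂], ![b, 1], ?_, ?_, aux_pairwise_two _ _ dB,
      aux_pairwise_two _ _ dB', ?_⟩
    · ext z
      simp only [Set.mem_iUnion, Fin.exists_fin_two, Matrix.cons_val_zero, Matrix.cons_val_one,
        Matrix.head_cons, hP₂, Set.mem_union]
    · ext z
      simp only [Set.mem_iUnion, Fin.exists_fin_two, Matrix.cons_val_zero, Matrix.cons_val_one,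
        Matrix.head_cons]
      rw [← Set.mem_union, goal2]
    · intro i
      fin_cases i <;> simp
end

section
/- If A and B are G-equidecomposable subsets of a G-set X, then there is a bijection g : A → B such that for every subset C ⊆ A, C is G-equidecomposable with g(C). -/
open Pointwise

/-- If `A ∼_G B` then there is a bijection `g : A → B` such that `C ∼_G g(C)` for every
`C ⊆ A`. -/
theorem exists_bijOn_of_equidecomposable {G X : Type*} [Group G] [MulAction G X]
    {A B : Set X} (h : Equidecomposable G A B) :
    ∃ g : X → X, Set.BijOn g A B ∧ ∀ C ⊆ A, Equidecomposable G C (g '' C) := by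
  classical
  obtain ⟨n, As, Bs, g, hA, hB, hdA, hdB, hg⟩ := h
  set f : X → X := fun x => if hx : ∃ i, x ∈ As i then g hx.choose • x else x with hf
  have key : ∀ i : Fin n, ∀ x ∈ As i, f x = g i • x := by
    intro i x hx
    have hex : ∃ j, x ∈ As j := ⟨i, hx⟩
    have hj : x ∈ As hex.choose := hex.choose_spec
    have : hex.choose = i := by
      by_contra hne
      exact (hdA hne).le_bot ⟨hj, hx⟩
    simp only [hf, dif_pos hex, this]
  have hmem : ∀ i : Fin n, ∀ x ∈ As i, f x ∈ Bs i := by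
    intro i x hx
    rw [key i x hx, ← hg i]
    exact Set.smul_mem_smul_set hx
  refine ⟨f, ⟨?_, ?_, ?_⟩, ?_⟩
  · -- MapsTo
    intro x hx
    rw [← hA] at hx
    obtain ⟨i, hi⟩ := Set.mem_iUnion.mp hx
    rw [← hB]
    exact Set.mem_iUnion.mpr ⟨i, hmem i x hi⟩
  · -- InjOn
    intro x hx y hy hxy
    rw [← hA] at hx hy
    obtain ⟨i, hi⟩ := Set.mem_iUnion.mp hx
    obtain ⟨j, hj⟩ := Set.mem_iUnion.mp hy
    have hij : i = j := by
      by_contra hne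
      exact (hdB hne).le_bot ⟨hxy ▸ hmem i x hi, hmem j y hj⟩
    rw [key i x hi, key j y hj, hij] at hxy
    exact smul_left_cancel _ hxy
  · -- SurjOn
    intro b hb
    rw [← hB] at hb
    obtain ⟨i, hi⟩ := Set.mem_iUnion.mp hb
    rw [← hg i] at hi
    obtain ⟨x, hx, rfl⟩ := hi
    refine ⟨x, ?_, key i x hx⟩
    rw [← hA]; exact Set.mem_iUnion.mpr ⟨i, hx⟩
  · -- Equidecomposability of subsets
    intro C hC
    refine ⟨n, fun i => C ∩ As i, fun i => g i • (C ∩ As i), g, ?_, ?_, ?_, ?_, fun i => rfl⟩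
    · rw [← Set.inter_iUnion, hA]
      exact Set.inter_eq_left.mpr hC
    · ext y
      simp only [Set.mem_iUnion, Set.mem_image]
      constructor
      · rintro ⟨i, x, ⟨hxC, hxA⟩, rfl⟩
        exact ⟨x, hxC, key i x hxA⟩
      · rintro ⟨x, hxC, rfl⟩
        have hx : x ∈ ⋃ i, As i := hA ▸ hC hxC
        obtain ⟨i, hi⟩ := Set.mem_iUnion.mp hx
        exact ⟨i, x, ⟨hxC, hi⟩, (key i x hi).symm⟩
    · intro i j hne
      exact ((hdA hne).mono Set.inter_subset_right Set.inter_subset_right)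
    · intro i j hne
      refine (hdB hne).mono ?_ ?_
      · rw [← hg i]; exact Set.smul_set_mono Set.inter_subset_right
      · rw [← hg j]; exact Set.smul_set_mono Set.inter_subset_right
end

section
/- Banach–Schröder–Bernstein theorem: suppose G acts on X and A, B ⊆ X. If A is G-equidecomposable with a subset of B, and B is G-equidecomposable with a subset of A, then A is G-equidecomposable with B. -/
open Pointwise

/-- `f` realizes an equidecomposition of `A` with `B`: it is injective on `A`,
maps `A` onto `B`, and acts on `A` by finitely many group elements. -/
def IsTranslate (G : Type*) {X : Type*} [Group G] [MulAction G X]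
    (f : X → X) (A B : Set X) : Prop :=
  Set.InjOn f A ∧ f '' A = B ∧ ∃ S : Finset G, ∀ x ∈ A, ∃ g ∈ S, f x = g • x

theorem equi_to_translate {G X : Type*} [Group G] [MulAction G X] {A B : Set X}
    (h : Equidecomposable G A B) : ∃ f : X → X, IsTranslate G f A B := by
  classical
  obtain ⟨n, As, Bs, g, hA, hB, hdA, hdB, hg⟩ := h
  have hmemA : ∀ x, x ∈ A ↔ ∃ i, x ∈ As i := by
    intro x; rw [← hA, Set.mem_iUnion]
  have huniq : ∀ {i j : Fin n} {x : X}, x ∈ As i → x ∈ As j → i = j := by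
    intro i j x hi hj
    by_contra hne
    exact Set.disjoint_left.mp (hdA hne) hi hj
  refine ⟨fun x => if h : ∃ i, x ∈ As i then g h.choose • x else x, ?_, ?_, ?_⟩
  · intro x hx y hy hxy
    have hx' := (hmemA x).mp hx
    have hy' := (hmemA y).mp hy
    simp only [dif_pos hx', dif_pos hy'] at hxy
    have hxB : g hx'.choose • x ∈ Bs hx'.choose := by
      rw [← hg]; exact Set.smul_mem_smul_set hx'.choose_spec
    have hyB : g hy'.choose • y ∈ Bs hy'.choose := by
      rw [← hg]; exact Set.smul_mem_smul_set hy'.choose_spec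
    have hij : hx'.choose = hy'.choose := by
      by_contra hne
      exact Set.disjoint_left.mp (hdB hne) hxB (hxy ▸ hyB)
    rw [hij] at hxy
    exact smul_left_cancel _ hxy
  · ext y
    constructor
    · rintro ⟨x, hx, rfl⟩
      have hx' := (hmemA x).mp hx
      simp only [dif_pos hx']
      rw [← hB]
      exact Set.mem_iUnion.mpr ⟨hx'.choose, by rw [← hg]; exact Set.smul_mem_smul_set hx'.choose_spec⟩
    · intro hy
      rw [← hB] at hy
      obtain ⟨j, hj⟩ := Set.mem_iUnion.mp hy
      rw [← hg] at hj
      obtain ⟨x, hxj, rfl⟩ := hj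
      have hxA : x ∈ A := (hmemA x).mpr ⟨j, hxj⟩
      refine ⟨x, hxA, ?_⟩
      have hx' : ∃ i, x ∈ As i := ⟨j, hxj⟩
      simp only [dif_pos hx']
      rw [huniq hx'.choose_spec hxj]
  · refine ⟨Finset.image g Finset.univ, ?_⟩
    intro x hx
    have hx' := (hmemA x).mp hx
    exact ⟨g hx'.choose, Finset.mem_image_of_mem g (Finset.mem_univ _), by simp only [dif_pos hx']⟩


theorem translate_to_equi {G X : Type*} [Group G] [MulAction G X] {A B : Set X}
    {f : X → X} (h : IsTranslate G f A B) : Equidecomposable G A B := by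
  classical
  obtain ⟨hinj, himg, S, hS⟩ := h
  set L := S.toList with hL
  set n := L.length + 1 with hn
  set gs : Fin n → G := fun i => L.getD i.val 1 with hgs
  have hex : ∀ x ∈ A, ∃ i : Fin n, f x = gs i • x := by
    intro x hx
    obtain ⟨s, hsS, hfs⟩ := hS x hx
    obtain ⟨k, hk, hkeq⟩ := List.mem_iff_getElem.mp (Finset.mem_toList.mpr hsS)
    refine ⟨⟨k, by simp only [hn, hL]; omega⟩, ?_⟩
    simpa [hgs, hL, List.getD_eq_getElem?_getD, List.getElem?_eq_getElem hk, hkeq] using hfs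
  set ix : X → Fin n := fun x =>
    if h : ∃ i : Fin n, f x = gs i • x then h.choose else ⟨0, by omega⟩ with hix
  have hixspec : ∀ x ∈ A, f x = gs (ix x) • x := by
    intro x hx
    have h' := hex x hx
    simp only [hix, dif_pos h']
    exact h'.choose_spec
  set As : Fin n → Set X := fun i => {x | x ∈ A ∧ ix x = i} with hAs
  set Bs : Fin n → Set X := fun i => gs i • As i with hBs
  have hAsSub : ∀ i, As i ⊆ A := fun i x hx => hx.1
  have hBsImg : ∀ i, Bs i = f '' As i := by
    intro i
    ext y
    simp only [hBs, Set.mem_smul_set, Set.mem_image]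
    constructor
    · rintro ⟨x, hx, rfl⟩
      exact ⟨x, hx, by rw [hixspec x hx.1, hx.2]⟩
    · rintro ⟨x, hx, rfl⟩
      exact ⟨x, hx, by rw [hixspec x hx.1, hx.2]⟩
  refine ⟨n, As, Bs, gs, ?_, ?_, ?_, ?_, fun i => rfl⟩
  · ext x
    simp only [Set.mem_iUnion, hAs, Set.mem_setOf_eq]
    exact ⟨fun ⟨i, hi⟩ => hi.1, fun hx => ⟨ix x, hx, rfl⟩⟩
  · rw [← himg]
    ext y
    simp only [Set.mem_iUnion, hBsImg, Set.mem_image, hAs, Set.mem_setOf_eq]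
    constructor
    · rintro ⟨i, x, hx, rfl⟩
      exact ⟨x, hx.1, rfl⟩
    · rintro ⟨x, hx, rfl⟩
      exact ⟨ix x, x, ⟨hx, rfl⟩, rfl⟩
  · intro i j hne
    rw [Function.onFun, Set.disjoint_left]
    rintro x ⟨-, hxi⟩ ⟨-, hxj⟩
    exact hne (hxi ▸ hxj)
  · intro i j hne
    rw [Function.onFun, Set.disjoint_left]
    simp only [hBsImg, Set.mem_image]
    rintro y ⟨x, hxi, rfl⟩ ⟨x', hxj, hxx⟩
    have : x' = x := hinj (hAsSub j hxj) (hAsSub i hxi) hxx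
    exact hne (hxi.2 ▸ (this ▸ hxj.2))

/-- Banach–Schröder–Bernstein: if `A` is `G`-equidecomposable with a subset of `B` and
`B` is `G`-equidecomposable with a subset of `A`, then `A ∼_G B`. -/
theorem banach_schroeder_bernstein {G X : Type*} [Group G] [MulAction G X]
    {A B : Set X} (h1 : ∃ B₁ ⊆ B, Equidecomposable G A B₁)
    (h2 : ∃ A₁ ⊆ A, Equidecomposable G B A₁) :
    Equidecomposable G A B := by
  classical
  obtain ⟨B₁, hB₁, hAB₁⟩ := h1
  obtain ⟨A₁, hA₁, hBA₁⟩ := h2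
  obtain ⟨f, hfinj, hfim, Sf, hSf⟩ := equi_to_translate hAB₁
  obtain ⟨g, hginj, hgim, Sg, hSg⟩ := equi_to_translate hBA₁
  have hfA : ∀ x ∈ A, f x ∈ B := fun x hx => hB₁ (hfim ▸ Set.mem_image_of_mem f hx)
  have hgB : ∀ y ∈ B, g y ∈ A := fun y hy => hA₁ (hgim ▸ Set.mem_image_of_mem g hy)
  -- the iterated sets
  set Cn : ℕ → Set X := fun n => Nat.rec (A \ g '' B) (fun _ Cn => g '' (f '' Cn)) n with hCn
  set C : Set X := ⋃ n, Cn n with hC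
  have hCnA : ∀ n, Cn n ⊆ A := by
    intro n
    induction n with
    | zero => exact Set.diff_subset
    | succ n ih =>
      rintro x ⟨y, ⟨c, hc, rfl⟩, rfl⟩
      exact hgB _ (hfA _ (ih hc))
  have hCA : C ⊆ A := Set.iUnion_subset hCnA
  -- inverse of g on g '' B
  set ginv : X → X := fun y => if h : ∃ b ∈ B, g b = y then h.choose else y with hginvdef
  have hginv : ∀ b ∈ B, ginv (g b) = b := by
    intro b hb
    have hex : ∃ b' ∈ B, g b' = g b := ⟨b, hb, rfl⟩
    obtain ⟨hb', heq⟩ := hex.choose_spec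
    simp only [hginvdef, dif_pos hex]
    exact hginj hb' hb heq
  -- key identity
  have key : A \ C = g '' (B \ f '' C) := by
    ext x
    constructor
    · rintro ⟨hxA, hxC⟩
      have hx0 : x ∉ Cn 0 := fun h => hxC (Set.mem_iUnion.mpr ⟨0, h⟩)
      have hxg : x ∈ g '' B := by
        by_contra h
        exact hx0 ⟨hxA, h⟩
      obtain ⟨b, hb, rfl⟩ := hxg
      refine ⟨b, ⟨hb, ?_⟩, rfl⟩
      rintro ⟨c, hcC, rfl⟩
      obtain ⟨m, hm⟩ := Set.mem_iUnion.mp hcC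
      exact hxC (Set.mem_iUnion.mpr ⟨m + 1, ⟨f c, ⟨c, hm, rfl⟩, rfl⟩⟩)
    · rintro ⟨b, ⟨hbB, hbf⟩, rfl⟩
      refine ⟨hgB b hbB, ?_⟩
      intro hgC
      obtain ⟨m, hm⟩ := Set.mem_iUnion.mp hgC
      cases m with
      | zero => exact hm.2 ⟨b, hbB, rfl⟩
      | succ m =>
        obtain ⟨b', hb', heq⟩ := hm
        have hb'B : b' ∈ B := by
          obtain ⟨c, hc, rfl⟩ := hb'
          exact hfA c (hCnA m hc)
        have : b' = b := hginj hb'B hbB heq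
        subst this
        obtain ⟨c, hc, rfl⟩ := hb'
        exact hbf ⟨c, Set.mem_iUnion.mpr ⟨m, hc⟩, rfl⟩
  set h : X → X := fun x => if x ∈ C then f x else ginv x with hhdef
  have hAC : ∀ x ∈ A \ C, ∃ b ∈ B \ f '' C, g b = x ∧ h x = b := by
    intro x hx
    rw [key] at hx
    obtain ⟨b, hb, rfl⟩ := hx
    refine ⟨b, hb, rfl, ?_⟩
    have hmem : g b ∈ A \ C := by rw [key]; exact ⟨b, hb, rfl⟩
    have : g b ∉ C := hmem.2
    simp only [hhdef, if_neg this]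
    exact hginv b hb.1
  have hhC : ∀ x ∈ C, h x = f x := fun x hx => by simp only [hhdef, if_pos hx]
  apply translate_to_equi (f := h)
  refine ⟨?_, ?_, ?_⟩
  · -- injective on A
    intro x hx y hy hxy
    by_cases hxC : x ∈ C <;> by_cases hyC : y ∈ C
    · rw [hhC x hxC, hhC y hyC] at hxy
      exact hfinj (hCA hxC) (hCA hyC) hxy
    · obtain ⟨b, hb, hgb, hhy⟩ := hAC y ⟨hy, hyC⟩
      rw [hhC x hxC, hhy] at hxy
      exact absurd ⟨x, hxC, hxy⟩ hb.2
    · obtain ⟨b, hb, hgb, hhx⟩ := hAC x ⟨hx, hxC⟩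
      rw [hhC y hyC, hhx] at hxy
      exact absurd ⟨y, hyC, hxy.symm⟩ hb.2
    · obtain ⟨b, hb, hgb, hhx⟩ := hAC x ⟨hx, hxC⟩
      obtain ⟨b', hb', hgb', hhy⟩ := hAC y ⟨hy, hyC⟩
      rw [hhx, hhy] at hxy
      rw [← hgb, ← hgb', hxy]
  · -- image
    ext y
    constructor
    · rintro ⟨x, hx, rfl⟩
      by_cases hxC : x ∈ C
      · rw [hhC x hxC]; exact hfA x hx
      · obtain ⟨b, hb, hgb, hhx⟩ := hAC x ⟨hx, hxC⟩
        rw [hhx]; exact hb.1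
    · intro hy
      by_cases hyf : y ∈ f '' C
      · obtain ⟨c, hc, rfl⟩ := hyf
        exact ⟨c, hCA hc, hhC c hc⟩
      · have hgy : g y ∈ A \ C := by rw [key]; exact ⟨y, ⟨hy, hyf⟩, rfl⟩
        obtain ⟨b, hb, hgb, hhgy⟩ := hAC _ hgy
        have : b = y := hginj hb.1 hy hgb
        exact ⟨g y, hgy.1, by rw [hhgy, this]⟩
  · -- finitely many translations
    refine ⟨Sf ∪ Sg.image (·⁻¹), ?_⟩
    intro x hx
    by_cases hxC : x ∈ C
    · obtain ⟨s, hs, hfs⟩ := hSf x hx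
      exact ⟨s, Finset.mem_union_left _ hs, by rw [hhC x hxC, hfs]⟩
    · obtain ⟨b, hb, hgb, hhx⟩ := hAC x ⟨hx, hxC⟩
      obtain ⟨t, ht, hgt⟩ := hSg b hb.1
      refine ⟨t⁻¹, Finset.mem_union_right _ (Finset.mem_image_of_mem _ ht), ?_⟩
      rw [hhx, ← hgb, hgt, inv_smul_smul]
end

section
/- Let σ be the rotation of ℝ³ about the z-axis with matrix (1/5)[[3,−4,0],[4,3,0],[0,0,5]] and τ the rotation about the x-axis with matrix (1/5)[[5,0,0],[0,3,−4],[0,4,3]]. Then σ and τ are independent: no nontrivial reduced word in σ, σ⁻¹, τ, τ⁻¹ equals the identity. Hence σ and τ generate a free subgroup of SO(3) of rank 2. -/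
open Pointwise

/-- Rotation about the z-axis by `arccos (3/5)`. -/
noncomputable def sigmaRot : Matrix (Fin 3) (Fin 3) ℝ :=
  !![3/5, -4/5, 0; 4/5, 3/5, 0; 0, 0, 1]

/-- The inverse (transpose) of `sigmaRot`. -/
noncomputable def sigmaRotInv : Matrix (Fin 3) (Fin 3) ℝ :=
  !![3/5, 4/5, 0; -4/5, 3/5, 0; 0, 0, 1]

/-- Rotation about the x-axis by `arccos (3/5)`. -/
noncomputable def tauRot : Matrix (Fin 3) (Fin 3) ℝ :=
  !![1, 0, 0; 0, 3/5, -4/5; 0, 4/5, 3/5]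

/-- The inverse (transpose) of `tauRot`. -/
noncomputable def tauRotInv : Matrix (Fin 3) (Fin 3) ℝ :=
  !![1, 0, 0; 0, 3/5, 4/5; 0, -4/5, 3/5]

/-- Evaluation of an element of the free group on two generators (`true ↦ σ`,
`false ↦ τ`) as a product of rotation matrices, reading its reduced word. -/
noncomputable def wordProd (w : FreeGroup Bool) : Matrix (Fin 3) (Fin 3) ℝ :=
  (w.toWord.map (fun p =>
    if p.1 then (if p.2 then sigmaRot else sigmaRotInv)
    else (if p.2 then tauRot else tauRotInv))).prod

namespace SigmaTauAux

instance : Fact (Nat.Prime 5) := ⟨by norm_num⟩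

/-- The real matrix attached to a letter. -/
noncomputable def realM (p : Bool × Bool) : Matrix (Fin 3) (Fin 3) ℝ :=
  if p.1 then (if p.2 then sigmaRot else sigmaRotInv)
  else (if p.2 then tauRot else tauRotInv)

/-- Five times the real matrix, as an integer matrix. -/
def intM (p : Bool × Bool) : Matrix (Fin 3) (Fin 3) ℤ :=
  if p.1 then (if p.2 then !![3,-4,0;4,3,0;0,0,5] else !![3,4,0;-4,3,0;0,0,5])
  else (if p.2 then !![5,0,0;0,3,-4;0,4,3] else !![5,0,0;0,3,4;0,-4,3])

/-- The integer matrix mod 5. -/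
def zM (p : Bool × Bool) : Matrix (Fin 3) (Fin 3) (ZMod 5) := (intM p).map Int.cast

def uvals (p : Bool × Bool) : Fin 3 → ZMod 5 :=
  if p.1 then (if p.2 then ![3,4,0] else ![1,2,0])
  else (if p.2 then ![0,3,4] else ![0,1,2])

def vvals (p : Bool × Bool) : Fin 3 → ZMod 5 :=
  if p.1 then (if p.2 then ![1,2,0] else ![3,4,0])
  else (if p.2 then ![0,1,2] else ![0,3,4])

lemma zM_eq : ∀ p, zM p = Matrix.vecMulVec (uvals p) (vvals p) := by decide

lemma dot_ne_zero : ∀ p q : Bool × Bool, (p.1 ≠ q.1 ∨ p.2 = q.2) →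
    dotProduct (vvals p) (uvals q) ≠ 0 := by decide

lemma vecMulVec_ne_zero : ∀ p q, Matrix.vecMulVec (uvals p) (vvals q) ≠ 0 := by decide

lemma intM_cast_real (p : Bool × Bool) :
    (intM p).map (Int.cast : ℤ → ℝ) = (5 : ℝ) • realM p := by
  obtain ⟨a, b⟩ := p
  cases a <;> cases b <;>
    · ext i j
      fin_cases i <;> fin_cases j <;>
        simp [intM, realM, sigmaRot, sigmaRotInv, tauRot, tauRotInv,
          Matrix.vecHead, Matrix.vecTail] <;> norm_num

lemma vecMulVec_mul (u₁ v₁ u₂ v₂ : Fin 3 → ZMod 5) :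
    Matrix.vecMulVec u₁ v₁ * Matrix.vecMulVec u₂ v₂ =
      (dotProduct v₁ u₂) • Matrix.vecMulVec u₁ v₂ := by
  ext i j
  simp only [Matrix.mul_apply, Matrix.vecMulVec_apply, Matrix.smul_apply,
    dotProduct, Finset.sum_mul, smul_eq_mul]
  apply Finset.sum_congr rfl
  intros
  ring

/-- the relation of non-cancellation between adjacent letters -/
def Rel (a b : Bool × Bool) : Prop := a.1 ≠ b.1 ∨ a.2 = b.2

lemma chain'_of_not_decomp :
    ∀ L : List (Bool × Bool),
      (∀ L₂ (x : Bool) (b : Bool) L₃, L ≠ L₂ ++ (x, b) :: (x, !b) :: L₃) →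
      List.Chain' Rel L := by
  intro L
  induction L with
  | nil => intro _; exact List.isChain_nil
  | cons a t ih =>
    intro H
    cases t with
    | nil => exact List.isChain_singleton a
    | cons b t' =>
      refine List.IsChain.cons_cons ?_ (ih ?_)
      · by_contra hR
        have h1 : a.1 = b.1 ∧ a.2 ≠ b.2 := by
          constructor
          · by_contra h; exact hR (Or.inl h)
          · intro h; exact hR (Or.inr h)
        have hb : b = (a.1, !a.2) := by
          obtain ⟨h1, h2⟩ := h1
          obtain ⟨b1, b2⟩ := b
          obtain ⟨a1, a2⟩ := a
          simp_all
          cases a2 <;> cases b2 <;> simp_all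
        exact H [] a.1 a.2 t' (by rw [hb]; simp)
      · intro L₂ x bb L₃ h
        exact H (a :: L₂) x bb L₃ (by rw [h]; rfl)

lemma chain'_toWord (w : FreeGroup Bool) : List.Chain' Rel w.toWord := by
  apply chain'_of_not_decomp
  intro L₂ x b L₃ h
  exact FreeGroup.reduce.not (x := x) (b := b)
    (by rw [FreeGroup.reduce_toWord]; exact h)

lemma prod_zM_eq (p : Bool × Bool) :
    ∀ L : List (Bool × Bool), List.Chain' Rel (p :: L) →
      ∃ c : ZMod 5, c ≠ 0 ∧ ((p :: L).map zM).prod =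
        c • Matrix.vecMulVec (uvals p)
          (vvals ((p :: L).getLast (List.cons_ne_nil _ _))) := by
  intro L
  induction L generalizing p with
  | nil =>
    intro _
    exact ⟨1, one_ne_zero, by simp [zM_eq]⟩
  | cons q t ih =>
    intro hc
    have hpq : Rel p q := (List.isChain_cons_cons.mp hc).1
    obtain ⟨c, hc0, hprod⟩ := ih q (List.isChain_cons_cons.mp hc).2
    refine ⟨(dotProduct (vvals p) (uvals q)) * c, ?_, ?_⟩
    · exact mul_ne_zero (dot_ne_zero p q hpq) hc0
    · have hlast : (p :: q :: t).getLast (List.cons_ne_nil _ _) =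
          (q :: t).getLast (List.cons_ne_nil _ _) := List.getLast_cons _
      rw [hlast]
      calc ((p :: q :: t).map zM).prod = zM p * ((q :: t).map zM).prod := by
            simp [List.prod_cons]
        _ = Matrix.vecMulVec (uvals p) (vvals p) *
            (c • Matrix.vecMulVec (uvals q)
              (vvals ((q :: t).getLast (List.cons_ne_nil _ _)))) := by
            rw [zM_eq, hprod]
        _ = c • (Matrix.vecMulVec (uvals p) (vvals p) *
            Matrix.vecMulVec (uvals q)
              (vvals ((q :: t).getLast (List.cons_ne_nil _ _)))) := by
            rw [mul_smul_comm]
        _ = _ := by rw [vecMulVec_mul, smul_smul, mul_comm]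

lemma prod_zM_ne_zero {L : List (Bool × Bool)} (hL : L ≠ [])
    (hc : List.Chain' Rel L) : (L.map zM).prod ≠ 0 := by
  cases L with
  | nil => exact absurd rfl hL
  | cons p t =>
    obtain ⟨c, hc0, hprod⟩ := prod_zM_eq p t hc
    rw [hprod]
    intro h
    exact vecMulVec_ne_zero _ _ (by
      have := smul_eq_zero.mp h
      tauto)

lemma prod_map_ringHom {R : Type*} [CommRing R] (f : ℤ →+* R)
    (L : List (Bool × Bool)) :
    ((L.map intM).prod).map f = (L.map fun p => (intM p).map f).prod := by
  induction L with
  | nil => simp [Matrix.map_one f f.map_zero f.map_one]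
  | cons p t ih =>
    simp only [List.map_cons, List.prod_cons, ← ih]
    exact Matrix.map_mul (f := f)

lemma prod_int_cast_real (L : List (Bool × Bool)) :
    ((L.map intM).prod).map (Int.cast : ℤ → ℝ) =
      (5 : ℝ) ^ L.length • (L.map realM).prod := by
  have h := prod_map_ringHom (Int.castRingHom ℝ) L
  rw [show ⇑(Int.castRingHom ℝ) = (Int.cast : ℤ → ℝ) from rfl] at h
  rw [h]
  clear h
  induction L with
  | nil => simp
  | cons p t ih =>
    simp only [List.map_cons, List.prod_cons, List.length_cons]
    rw [intM_cast_real p, ih, smul_mul_assoc, mul_smul_comm, smul_smul, ← pow_succ']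

lemma sigma_mul : sigmaRot * sigmaRotInv = 1 := by
  ext i j
  fin_cases i <;> fin_cases j <;>
    simp [Matrix.mul_apply, Fin.sum_univ_three, sigmaRot, sigmaRotInv,
      Matrix.one_apply, Matrix.vecHead, Matrix.vecTail] <;> norm_num

lemma sigma_mul' : sigmaRotInv * sigmaRot = 1 := by
  ext i j
  fin_cases i <;> fin_cases j <;>
    simp [Matrix.mul_apply, Fin.sum_univ_three, sigmaRot, sigmaRotInv,
      Matrix.one_apply, Matrix.vecHead, Matrix.vecTail] <;> norm_num

lemma tau_mul : tauRot * tauRotInv = 1 := by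
  ext i j
  fin_cases i <;> fin_cases j <;>
    simp [Matrix.mul_apply, Fin.sum_univ_three, tauRot, tauRotInv,
      Matrix.one_apply, Matrix.vecHead, Matrix.vecTail] <;> norm_num

lemma tau_mul' : tauRotInv * tauRot = 1 := by
  ext i j
  fin_cases i <;> fin_cases j <;>
    simp [Matrix.mul_apply, Fin.sum_univ_three, tauRot, tauRotInv,
      Matrix.one_apply, Matrix.vecHead, Matrix.vecTail] <;> norm_num

/-- σ as a unit of the matrix ring. -/
noncomputable def sU : (Matrix (Fin 3) (Fin 3) ℝ)ˣ := ⟨sigmaRot, sigmaRotInv, sigma_mul, sigma_mul'⟩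
/-- τ as a unit of the matrix ring. -/
noncomputable def tU : (Matrix (Fin 3) (Fin 3) ℝ)ˣ := ⟨tauRot, tauRotInv, tau_mul, tau_mul'⟩

/-- The evaluation homomorphism. -/
noncomputable def ev : FreeGroup Bool →* (Matrix (Fin 3) (Fin 3) ℝ)ˣ :=
  FreeGroup.lift (fun b => if b then sU else tU)

lemma wordProd_eq (w : FreeGroup Bool) : wordProd w = (ev w : Matrix (Fin 3) (Fin 3) ℝ) := by
  conv_rhs => rw [← FreeGroup.mk_toWord (x := w)]
  rw [ev, FreeGroup.lift_mk]
  rw [← Units.coeHom_apply, map_list_prod, List.map_map]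
  unfold wordProd
  congr 1
  apply List.map_congr_left
  intro ⟨a, b⟩ _
  cases a <;> cases b <;>
    simp [sU, tU, realM, Units.coeHom_apply]

lemma wordProd_eq_prod_realM (w : FreeGroup Bool) :
    wordProd w = (w.toWord.map realM).prod := rfl

/-- Main lemma: nontrivial words evaluate to a non-identity matrix. -/
lemma wordProd_ne_one {w : FreeGroup Bool} (hw : w ≠ 1) : wordProd w ≠ 1 := by
  intro h1
  set L := w.toWord with hL
  have hLne : L ≠ [] := fun h => hw (FreeGroup.toWord_eq_nil_iff.mp h)
  -- integer product
  set P : Matrix (Fin 3) (Fin 3) ℤ := (L.map intM).prod with hP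
  have hreal : P.map (Int.cast : ℤ → ℝ) = (5 : ℝ) ^ L.length • (1 : Matrix (Fin 3) (Fin 3) ℝ) := by
    rw [hP, prod_int_cast_real, ← wordProd_eq_prod_realM, h1]
  have hPval : P = (5 : ℤ) ^ L.length • (1 : Matrix (Fin 3) (Fin 3) ℤ) := by
    ext i j
    have := congrFun (congrFun hreal i) j
    simp only [Matrix.map_apply, Matrix.smul_apply, Matrix.one_apply] at this ⊢
    by_cases hij : i = j <;> simp [hij] at this ⊢ <;> exact_mod_cast this
  -- reduce mod 5
  have hz : (L.map zM).prod = P.map (Int.cast : ℤ → ZMod 5) := by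
    have h := prod_map_ringHom (Int.castRingHom (ZMod 5)) L
    rw [show ⇑(Int.castRingHom (ZMod 5)) = (Int.cast : ℤ → ZMod 5) from rfl] at h
    rw [hP, h]
    rfl
  have hlen : L.length ≠ 0 := fun h => hLne (List.length_eq_zero_iff.mp h)
  have hzero : P.map (Int.cast : ℤ → ZMod 5) = 0 := by
    rw [hPval]
    ext i j
    simp only [Matrix.map_apply, Matrix.smul_apply, Matrix.one_apply, smul_eq_mul,
      Matrix.zero_apply]
    by_cases hij : i = j
    · simp only [hij, if_true, mul_one]
      rw [ZMod.intCast_zmod_eq_zero_iff_dvd]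
      exact dvd_pow_self (5:ℤ) hlen
    · simp [hij]
  have := prod_zM_ne_zero hLne (chain'_toWord w)
  rw [hz, hzero] at this
  exact this rfl

end SigmaTauAux

open SigmaTauAux in
/-- The rotations `σ` and `τ` lie in `SO(3)` and are independent: no nontrivial reduced
word in `σ, σ⁻¹, τ, τ⁻¹` is the identity; equivalently the evaluation map on the free
group of rank 2 is injective, so `σ` and `τ` generate a free subgroup of `SO(3)` of
rank 2. -/
theorem sigma_tau_independent :
    sigmaRot ∈ Matrix.specialOrthogonalGroup (Fin 3) ℝ ∧
    tauRot ∈ Matrix.specialOrthogonalGroup (Fin 3) ℝ ∧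
    (∀ w : FreeGroup Bool, w ≠ 1 → wordProd w ≠ 1) ∧
    Function.Injective wordProd := by
  refine ⟨?_, ?_, fun w hw => wordProd_ne_one hw, ?_⟩
  · rw [Matrix.mem_specialOrthogonalGroup_iff]
    constructor
    · rw [Matrix.mem_orthogonalGroup_iff]
      have : sigmaRot.transpose = sigmaRotInv := by
        ext i j
        fin_cases i <;> fin_cases j <;>
          simp [sigmaRot, sigmaRotInv, Matrix.star_eq_conjTranspose,
            Matrix.conjTranspose_apply, Matrix.vecHead, Matrix.vecTail]
      rw [this]; exact sigma_mul
    · simp [sigmaRot, Matrix.det_fin_three]; norm_num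
  · rw [Matrix.mem_specialOrthogonalGroup_iff]
    constructor
    · rw [Matrix.mem_orthogonalGroup_iff]
      have : tauRot.transpose = tauRotInv := by
        ext i j
        fin_cases i <;> fin_cases j <;>
          simp [tauRot, tauRotInv, Matrix.star_eq_conjTranspose,
            Matrix.conjTranspose_apply, Matrix.vecHead, Matrix.vecTail]
      rw [this]; exact tau_mul
    · simp [tauRot, Matrix.det_fin_three]; norm_num
  · intro a b hab
    have hev : ev a = ev b := Units.ext (by rw [← wordProd_eq, ← wordProd_eq]; exact hab)
    by_contra hne
    have h1 : a * b⁻¹ ≠ 1 := by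
      intro h
      exact hne (mul_inv_eq_one.mp h)
    apply wordProd_ne_one h1
    rw [wordProd_eq, map_mul, map_inv, hev, mul_inv_cancel]
    rfl
end

section
/- Let σ, τ ∈ SO(3) be the rotations with matrices (1/5)[[3,−4,0],[4,3,0],[0,0,5]] and (1/5)[[5,0,0],[0,3,−4],[0,4,3]]. For every nontrivial reduced word ω of length n in {σ,σ⁻¹,τ,τ⁻¹} whose rightmost letter is σ or σ⁻¹, the vector ω(1,0,0) has the form (a,b,c)/5ⁿ with a, b, c ∈ ℤ and 5 ∤ b. -/
open Pointwise

/-! ### Auxiliary integer / mod 5 setup -/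

/-- Integer matrices: `5` times the corresponding rotation matrices. -/
instance : Fact (Nat.Prime 5) := ⟨by norm_num⟩

/-- Integer matrices. -/
def letterMatZ : Bool × Bool → Matrix (Fin 3) (Fin 3) ℤ := fun p =>
  if p.1 then
    (if p.2 then !![3,-4,0;4,3,0;0,0,5] else !![3,4,0;-4,3,0;0,0,5])
  else
    (if p.2 then !![5,0,0;0,3,-4;0,4,3] else !![5,0,0;0,3,4;0,-4,3])

/-- The same matrices reduced mod 5. -/
def letterMat5 (p : Bool × Bool) : Matrix (Fin 3) (Fin 3) (ZMod 5) :=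
  (letterMatZ p).map Int.cast

/-- Integer vector obtained by applying the word product (times `5^n`) to `(1,0,0)`. -/
def vecZ (L : List (Bool × Bool)) : Fin 3 → ℤ :=
  ((L.map letterMatZ).prod).mulVec ![1, 0, 0]

/-- Its reduction mod 5. -/
def vec5 (L : List (Bool × Bool)) : Fin 3 → ZMod 5 :=
  ((L.map letterMat5).prod).mulVec ![1, 0, 0]

/-- Mod 5 class vectors attached to each leading letter. -/
def uvec : Bool × Bool → Fin 3 → ZMod 5 := fun p =>
  if p.1 then (if p.2 then ![1,3,0] else ![1,2,0])
  else (if p.2 then ![0,1,3] else ![0,1,2])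

lemma vec5_eq_cast (L : List (Bool × Bool)) :
    (fun i => ((vecZ L i : ZMod 5))) = vec5 L := by
  induction L with
  | nil =>
      funext i
      simp only [vecZ, vec5, List.map_nil, List.prod_nil, Matrix.one_mulVec]
      fin_cases i <;> simp
  | cons p L ih =>
      have hZ : vecZ (p :: L) = (letterMatZ p).mulVec (vecZ L) := by
        simp [vecZ, Matrix.mulVec_mulVec]
      have h5 : vec5 (p :: L) = (letterMat5 p).mulVec (vec5 L) := by
        simp [vec5, Matrix.mulVec_mulVec]
      funext i
      rw [hZ, h5, ← ih]
      simpa [letterMat5, Function.comp_def] using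
        RingHom.map_mulVec (Int.castRingHom (ZMod 5)) (letterMatZ p) (vecZ L) i

/-- Step: applying an allowed letter to a class vector yields a nonzero multiple of the
new class vector. -/
lemma step5 (p q : Bool × Bool) (h : ¬(p.1 = q.1 ∧ p.2 = !q.2)) :
    ∃ β : ZMod 5, β ≠ 0 ∧ (letterMat5 p).mulVec (uvec q) = β • uvec p := by
  rcases p with ⟨a, b⟩
  rcases q with ⟨c, d⟩
  cases a <;> cases b <;> cases c <;> cases d <;> revert h <;> decide

/-- If `p :: L` is reduced then so is `L`, and the first pair is not cancelling. -/
lemma reduce_tail {p : Bool × Bool} {L : List (Bool × Bool)}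
    (h : FreeGroup.reduce (p :: L) = p :: L) :
    FreeGroup.reduce L = L ∧ ∀ q ∈ L.head?, ¬(p.1 = q.1 ∧ p.2 = !q.2) := by
  rw [FreeGroup.reduce.cons] at h
  cases hr : FreeGroup.reduce L with
  | nil =>
      rw [hr] at h
      have h' : [p] = p :: L := h
      have : L = [] := by injection h' with _ h2; exact h2.symm
      subst this
      simp
  | cons hd tl =>
      rw [hr] at h
      have h' : (if p.1 = hd.1 ∧ p.2 = !hd.2 then tl else p :: hd :: tl) = p :: L := h
      by_cases hc : p.1 = hd.1 ∧ p.2 = !hd.2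
      · rw [if_pos hc] at h'
        exfalso
        have hredL : FreeGroup.Red L (hd :: tl) := hr ▸ FreeGroup.reduce.red
        have hlen := FreeGroup.Red.length_le hredL
        have := congrArg List.length h'
        simp at this hlen
        omega
      · rw [if_neg hc] at h'
        have hL : L = hd :: tl := by
          injection h' with _ h2
          exact h2.symm
        subst hL
        refine ⟨rfl, ?_⟩
        intro q hq
        simp only [List.head?_cons, Option.mem_def, Option.some.injEq] at hq
        subst hq
        exact hc

/-- Main invariant, by induction on the reduced word. -/
lemma key (L : List (Bool × Bool)) (p : Bool × Bool)
    (hred : FreeGroup.reduce (p :: L) = p :: L)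
    (hlast : ∃ s, (p :: L).getLast? = some (true, s)) :
    ∃ α : ZMod 5, α ≠ 0 ∧ vec5 (p :: L) = α • uvec p := by
  induction L generalizing p with
  | nil =>
      obtain ⟨s, hs⟩ := hlast
      have hp : p = (true, s) := by simpa using hs
      subst hp
      cases s <;> decide
  | cons q rest ih =>
      obtain ⟨hred', hhead⟩ := reduce_tail hred
      have hlast' : ∃ s, (q :: rest).getLast? = some (true, s) := by
        obtain ⟨s, hs⟩ := hlast
        exact ⟨s, by simpa [List.getLast?_cons_cons] using hs⟩
      obtain ⟨α, hα, hv⟩ := ih q hred' hlast'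
      obtain ⟨β, hβ, hstep⟩ := step5 p q (hhead q (by simp))
      refine ⟨β * α, mul_ne_zero hβ hα, ?_⟩
      have h5 : vec5 (p :: q :: rest) = (letterMat5 p).mulVec (vec5 (q :: rest)) := by
        simp [vec5, Matrix.mulVec_mulVec]
      rw [h5, hv, Matrix.mulVec_smul, hstep, smul_smul, mul_comm]

lemma uvec_one_ne (p : Bool × Bool) : uvec p 1 ≠ 0 := by
  rcases p with ⟨a, b⟩; cases a <;> cases b <;> decide

/-- The middle coordinate of the integer vector is not divisible by 5. -/
lemma not_dvd_vecZ (L : List (Bool × Bool)) (p : Bool × Bool)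
    (hred : FreeGroup.reduce (p :: L) = p :: L)
    (hlast : ∃ s, (p :: L).getLast? = some (true, s)) :
    ¬ (5 : ℤ) ∣ vecZ (p :: L) 1 := by
  obtain ⟨α, hα, hv⟩ := key L p hred hlast
  intro hdvd
  have h0 : ((vecZ (p :: L) 1 : ZMod 5)) = 0 := by
    exact_mod_cast (ZMod.intCast_zmod_eq_zero_iff_dvd _ 5).mpr hdvd
  have h1 : vec5 (p :: L) 1 = α * uvec p 1 := by rw [hv]; rfl
  have hc : ((vecZ (p :: L) 1 : ZMod 5)) = vec5 (p :: L) 1 :=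
    congrFun (vec5_eq_cast (p :: L)) 1
  rw [hc, h1] at h0
  exact (mul_ne_zero hα (uvec_one_ne p)) h0

/-- The real rotation matrices are `1/5` times the integer matrices. -/
lemma realMat_eq (p : Bool × Bool) :
    (if p.1 then (if p.2 then sigmaRot else sigmaRotInv)
     else (if p.2 then tauRot else tauRotInv)) =
    ((5 : ℝ)⁻¹) • (letterMatZ p).map Int.cast := by
  rcases p with ⟨a, b⟩
  cases a <;> cases b <;>
    · ext i j
      fin_cases i <;> fin_cases j <;>
        norm_num [sigmaRot, sigmaRotInv, tauRot, tauRotInv, letterMatZ,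
          Matrix.smul_apply, Matrix.map_apply]

lemma prod_eq (L : List (Bool × Bool)) :
    (L.map (fun p =>
      if p.1 then (if p.2 then sigmaRot else sigmaRotInv)
      else (if p.2 then tauRot else tauRotInv))).prod =
    ((5 : ℝ) ^ L.length)⁻¹ • ((L.map letterMatZ).prod).map Int.cast := by
  induction L with
  | nil =>
      simp [Matrix.map_one (Int.cast : ℤ → ℝ) Int.cast_zero Int.cast_one]
  | cons p L ih =>
      simp only [List.map_cons, List.prod_cons, ih, realMat_eq p, List.length_cons]
      have hmap : ((letterMatZ p * (L.map letterMatZ).prod).map (Int.cast : ℤ → ℝ)) =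
          (letterMatZ p).map Int.cast * ((L.map letterMatZ).prod).map Int.cast :=
        Matrix.map_mul (f := Int.castRingHom ℝ)
      rw [Matrix.smul_mul, Matrix.mul_smul, hmap, ← smul_assoc]
      congr 1
      simp [smul_eq_mul, pow_succ, mul_comm, mul_inv]

/-- Every nontrivial reduced word `ω` of length `n` in `σ^{±1}, τ^{±1}` whose rightmost
letter is `σ` or `σ⁻¹` sends `(1,0,0)` to a vector of the form `(a,b,c)/5ⁿ` with
`a, b, c ∈ ℤ` and `b` not divisible by `5`. -/
theorem wordProd_mulVec_form (w : FreeGroup Bool) (hw : w ≠ 1)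
    (hlast : ∃ s : Bool, w.toWord.getLast? = some (true, s)) :
    ∃ a b c : ℤ, ¬ (5 : ℤ) ∣ b ∧
      (wordProd w).mulVec ![1, 0, 0] =
        ![(a : ℝ) / 5 ^ w.toWord.length, (b : ℝ) / 5 ^ w.toWord.length,
          (c : ℝ) / 5 ^ w.toWord.length] := by
  have hne : w.toWord ≠ [] := fun h => hw (FreeGroup.toWord_eq_nil_iff.mp h)
  obtain ⟨p, L, hL⟩ := List.exists_cons_of_ne_nil hne
  have hred : FreeGroup.reduce w.toWord = w.toWord := FreeGroup.reduce_toWord w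
  refine ⟨vecZ w.toWord 0, vecZ w.toWord 1, vecZ w.toWord 2, ?_, ?_⟩
  · rw [hL]
    exact not_dvd_vecZ L p (hL ▸ hred) (hL ▸ hlast)
  · have hprod : wordProd w =
        ((5 : ℝ) ^ w.toWord.length)⁻¹ • ((w.toWord.map letterMatZ).prod).map Int.cast := by
      rw [wordProd]; exact prod_eq w.toWord
    rw [hprod, Matrix.smul_mulVec]
    funext i
    have hcastv : ((Int.cast : ℤ → ℝ) ∘ (![1, 0, 0] : Fin 3 → ℤ)) = (![1, 0, 0] : Fin 3 → ℝ) := by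
      funext j; fin_cases j <;> simp
    have hmv : (((w.toWord.map letterMatZ).prod).map (Int.cast : ℤ → ℝ)).mulVec ![1, 0, 0]
        = fun i => ((vecZ w.toWord i : ℝ)) := by
      funext i
      rw [← hcastv]
      exact ((RingHom.map_mulVec (Int.castRingHom ℝ)
        ((w.toWord.map letterMatZ).prod) ![1, 0, 0] i)).symm
    rw [hmv]
    fin_cases i <;> simp [Pi.smul_apply, smul_eq_mul, div_eq_inv_mul]
end
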